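/- Let f₀ be an automorphism of a Lie group G with stable subalgebra 𝔤⁻ (the sum of generalized eigenspaces of (df₀)_e for eigenvalues of modulus < 1). Then for every X ∈ 𝔤⁻, ad(X) : 𝔤 → 𝔤 is a nilpotent linear map, and tr(ad(X)) = 0. -/

import Mathlib

open TensorProduct

/-- Key multiplicative bracket lemma: for a Lie algebra automorphism `S`, the bracket of
generalized eigenvectors for `α` and `β` is a generalized eigenvector for `α * β`. -/
lemma lie_mem_maxGenEigenspace_mul {L : Type*} [LieRing L] [LieAlgebra ℂ L]
    (T : L ≃ₗ⁅ℂ⁆ L) (α β : ℂ) {x y : L}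
    (hx : x ∈ Module.End.maxGenEigenspace (T.toLinearEquiv : L →ₗ[ℂ] L) α)
    (hy : y ∈ Module.End.maxGenEigenspace (T.toLinearEquiv : L →ₗ[ℂ] L) β) :
    ⁅x, y⁆ ∈ Module.End.maxGenEigenspace (T.toLinearEquiv : L →ₗ[ℂ] L) (α * β) := by
  set S : Module.End ℂ L := (T.toLinearEquiv : L →ₗ[ℂ] L) with hSdef
  have hSapp : ∀ a : L, S a = T a := fun a => rfl
  have hSlie : ∀ a b : L, S ⁅a, b⁆ = ⁅S a, S b⁆ := by
    intro a b
    simp only [hSapp]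
    exact T.toLieHom.map_lie a b
  -- the bracket as a linear map on the tensor square
  let g : L ⊗[ℂ] L →ₗ[ℂ] L := TensorProduct.lift (LinearMap.mk₂ ℂ (fun a b : L => ⁅a, b⁆) add_lie smul_lie lie_add lie_smul)
  have hg : ∀ a b : L, g (a ⊗ₜ b) = ⁅a, b⁆ := by
    intro a b
    simp [g, TensorProduct.lift.tmul]
  let f₁ : Module.End ℂ (L ⊗[ℂ] L) := TensorProduct.map (S - α • 1) S
  let f₂ : Module.End ℂ (L ⊗[ℂ] L) := α • TensorProduct.map 1 (S - β • 1)
  have h_square : (S - (α * β) • 1) ∘ₗ g = g ∘ₗ (f₁ + f₂) := by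
    ext a b
    simp only [f₁, f₂, LinearMap.coe_comp, Function.comp_apply, AlgebraTensorModule.curry_apply,
      TensorProduct.curry_apply, LinearMap.coe_restrictScalars, LinearMap.add_apply,
      LinearMap.smul_apply, TensorProduct.map_tmul, LinearMap.sub_apply, Module.End.one_apply,
      LinearMap.smul_apply, map_add, map_smul, hg, LinearMap.map_add]
    rw [hSlie]
    simp only [sub_lie, lie_sub, smul_lie, lie_smul, smul_sub, smul_smul]
    abel
  have hcomm : Commute f₁ f₂ := by
    have : Commute (TensorProduct.map (S - α • 1) S) (TensorProduct.map 1 (S - β • 1)) := by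
      unfold Commute SemiconjBy
      ext a b
      simp only [Module.End.mul_apply, AlgebraTensorModule.curry_apply,
        TensorProduct.curry_apply, LinearMap.coe_restrictScalars, TensorProduct.map_tmul,
        Module.End.one_apply, LinearMap.sub_apply, LinearMap.smul_apply, map_sub, map_smul]
    exact this.smul_right α
  rw [Module.End.mem_maxGenEigenspace] at hx hy ⊢
  obtain ⟨m, hm⟩ := hx
  obtain ⟨n, hn⟩ := hy
  refine ⟨m + n, ?_⟩
  rw [← hg, ← LinearMap.comp_apply, Module.End.commute_pow_left_of_commute h_square,
    LinearMap.comp_apply]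
  suffices h : (((f₁ + f₂) ^ (m + n)) (x ⊗ₜ y)) = 0 by rw [h, map_zero]
  rw [hcomm.add_pow']
  rw [LinearMap.coe_sum, Finset.sum_apply]
  apply Finset.sum_eq_zero
  rintro ⟨i, j⟩ hij
  rw [Finset.HasAntidiagonal.mem_antidiagonal] at hij
  have hf₁pow : f₁ ^ i = TensorProduct.map ((S - α • 1) ^ i) (S ^ i) :=
    TensorProduct.map_pow _ _ i
  have hf₂pow : f₂ ^ j = α ^ j • TensorProduct.map 1 ((S - β • 1) ^ j) := by
    rw [smul_pow]
    congr 1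
    rw [TensorProduct.map_pow, one_pow]
  suffices h : ((f₁ ^ i) * (f₂ ^ j)) (x ⊗ₜ y) = 0 by
    rw [LinearMap.smul_apply, h, smul_zero]
  rcases le_or_gt m i with hi | hi
  · have h1 : ((S - α • 1) ^ i) x = 0 := Module.End.pow_map_zero_of_le hi hm
    rw [Module.End.mul_apply, hf₂pow, hf₁pow]
    simp [h1]
  · have hj : n ≤ j := by omega
    have h2 : ((S - β • 1) ^ j) y = 0 := Module.End.pow_map_zero_of_le hj hn
    rw [Module.End.mul_apply, hf₂pow]
    simp [h2]

/-- Let `f₀` be an automorphism of a Lie group `G` with stable subalgebra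
`𝔤⁻` (the sum of the generalized eigenspaces of `T = (df₀)_e` for eigenvalues of modulus
`< 1`).  Then for every `X ∈ 𝔤⁻`, `ad X : 𝔤 → 𝔤` is a nilpotent linear map and
`tr (ad X) = 0`. -/
theorem ad_nilpotent_trace_zero_on_stable {L : Type*} [LieRing L] [LieAlgebra ℂ L]
    [FiniteDimensional ℂ L] (T : L ≃ₗ⁅ℂ⁆ L) :
    ∀ X ∈ (⨆ (α : ℂ) (_ : ‖α‖ < 1),
        Module.End.maxGenEigenspace (T.toLinearEquiv : L →ₗ[ℂ] L) α),
      IsNilpotent (LieAlgebra.ad ℂ L X) ∧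
      LinearMap.trace ℂ L (LieAlgebra.ad ℂ L X) = 0 := by
  set S : Module.End ℂ L := (T.toLinearEquiv : L →ₗ[ℂ] L) with hSdef
  set V : ℂ → Submodule ℂ L := fun μ => S.maxGenEigenspace μ with hVdef
  intro X hX
  suffices hnil : IsNilpotent (LieAlgebra.ad ℂ L X) by
    refine ⟨hnil, ?_⟩
    exact (LinearMap.isNilpotent_trace_of_isNilpotent hnil).eq_zero
  by_cases hNT : Nontrivial L
  swap
  · rw [not_nontrivial_iff_subsingleton] at hNT
    exact ⟨1, by ext v; simp [Subsingleton.elim ((LieAlgebra.ad ℂ L X) v) 0]⟩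
  -- the set of eigenvalues is finite
  have hfin : {μ : ℂ | V μ ≠ ⊥}.Finite := by
    apply S.finite_hasEigenvalue.subset
    intro μ hμ
    exact Module.End.HasUnifEigenvalue.lt zero_lt_one hμ
  set Ω : Finset ℂ := hfin.toFinset with hΩdef
  have hΩmem : ∀ μ : ℂ, μ ∈ Ω ↔ V μ ≠ ⊥ := fun μ => hfin.mem_toFinset
  -- `0` is not an eigenvalue since `S` is invertible
  have hzero : V 0 = ⊥ := by
    rw [eq_bot_iff]
    intro v hv
    rw [hVdef, Module.End.mem_maxGenEigenspace] at hv
    obtain ⟨k, hk⟩ := hv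
    simp only [zero_smul, sub_zero] at hk
    have hSk : Function.Injective (S ^ k) :=
      Module.End.iterate_injective T.toLinearEquiv.injective k
    have : v = 0 := by
      apply hSk
      simpa using hk
    simp [this]
  -- eigenvalues have positive modulus
  have hΩne : Ω.Nonempty := by
    by_contra h
    rw [Finset.not_nonempty_iff_eq_empty] at h
    have htop := Module.End.iSup_maxGenEigenspace_eq_top S
    have hbot : (⊤ : Submodule ℂ L) = ⊥ := by
      rw [← htop]
      rw [eq_bot_iff]
      apply iSup_le
      intro μ
      by_cases hb : V μ = ⊥
      · exact le_of_eq hb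
      · exact absurd ((hΩmem μ).mpr hb) (by simp [h])
    obtain ⟨a, b, hab⟩ := hNT
    exact hab (by
      have ha : a ∈ (⊥ : Submodule ℂ L) := hbot ▸ Submodule.mem_top
      have hb' : b ∈ (⊥ : Submodule ℂ L) := hbot ▸ Submodule.mem_top
      rw [Submodule.mem_bot] at ha hb'
      rw [ha, hb'])
  set ε : NNReal := Ω.inf' hΩne (fun μ => ‖μ‖₊) with hεdef
  have hεpos : 0 < ε := by
    rw [hεdef, Finset.lt_inf'_iff]
    intro μ hμ
    rw [pos_iff_ne_zero]
    simp only [ne_eq, nnnorm_eq_zero]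
    intro h
    exact ((hΩmem μ).mp hμ) (h ▸ hzero)
  have hεle : ∀ μ : ℂ, V μ ≠ ⊥ → ε ≤ ‖μ‖₊ := by
    intro μ hμ
    exact Finset.inf'_le _ ((hΩmem μ).mpr hμ)
  set M : NNReal := Ω.sup (fun μ => ‖μ‖₊) with hMdef
  have hMle : ∀ μ : ℂ, V μ ≠ ⊥ → ‖μ‖₊ ≤ M := by
    intro μ hμ
    exact Finset.le_sup ((hΩmem μ).mpr hμ)
  set F : Finset ℂ := Ω.filter (fun μ => ‖μ‖ < 1) with hFdef
  set r : NNReal := F.sup (fun μ => ‖μ‖₊) with hrdef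
  have hr1 : r < 1 := by
    rw [hrdef, Finset.sup_lt_iff (show (⊥ : NNReal) < 1 by norm_num)]
    intro μ hμ
    rw [hFdef, Finset.mem_filter] at hμ
    have : ‖μ‖ < 1 := by
      exact hμ.2
    exact_mod_cast this
  have hrle : ∀ μ : ℂ, μ ∈ F → ‖μ‖₊ ≤ r := fun μ hμ => Finset.le_sup hμ
  -- the filtered sums
  set W : NNReal → Submodule ℂ L := fun c => ⨆ (γ : ℂ) (_ : ‖γ‖₊ ≤ c), V γ with hWdef
  set G : Submodule ℂ L := ⨆ μ : {μ : ℂ // μ ∈ F}, V μ.1 with hGdef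
  -- the stable subalgebra is contained in `G`
  have hXG : X ∈ G := by
    apply (iSup₂_le (f := fun (α : ℂ) (_ : ‖α‖ < 1) => V α) ?_) hX
    intro α hα
    by_cases hb : V α = ⊥
    · show V α ≤ G
      rw [hb]; exact bot_le
    · have hαF : α ∈ F := by
        rw [hFdef, Finset.mem_filter]
        exact ⟨(hΩmem α).mpr hb, hα⟩
      exact le_iSup (fun μ : {μ : ℂ // μ ∈ F} => V μ.1) ⟨α, hαF⟩
  -- single bracket: elements of `G` move `W c` into `W (r * c)`
  have hbra : ∀ Y, Y ∈ G → ∀ c : NNReal, ∀ v ∈ W c, ⁅Y, v⁆ ∈ W (r * c) := by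
    intro Y hY c
    have hY' : Y ∈ ⨆ μ : {μ : ℂ // μ ∈ F}, V μ.1 := hY
    clear hY
    refine Submodule.iSup_induction'
      (motive := fun Y _ => ∀ v ∈ W c, ⁅Y, v⁆ ∈ W (r * c)) _
      (fun μ x hx => ?_) (fun v hv => by rw [zero_lie]; exact zero_mem _)
      (fun Y₁ Y₂ hY₁ hY₂ h₁ h₂ v hv => by
        rw [add_lie]; exact add_mem (h₁ v hv) (h₂ v hv)) hY'
    · intro v hv
      have hv' : v ∈ ⨆ (γ : ℂ) (_ : ‖γ‖₊ ≤ c), V γ := hv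
      refine Submodule.iSup_induction' (motive := fun v _ => ⁅x, v⁆ ∈ W (r * c)) _
        (fun γ w hw => ?_)
        (by show ⁅x, (0 : L)⁆ ∈ W (r * c); rw [lie_zero]; exact zero_mem _)
        (fun v₁ v₂ hv₁ hv₂ h₁ h₂ => by
          show ⁅x, v₁ + v₂⁆ ∈ W (r * c)
          rw [lie_add]
          exact add_mem h₁ h₂) hv'
      by_cases hγ : ‖γ‖₊ ≤ c
      · rw [iSup_pos hγ] at hw
        have hkey : ⁅x, w⁆ ∈ V (μ.1 * γ) := lie_mem_maxGenEigenspace_mul T μ.1 γ hx hw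
        have hle : ‖μ.1 * γ‖₊ ≤ r * c := by
          rw [nnnorm_mul]
          exact mul_le_mul' (hrle μ.1 μ.2) hγ
        exact le_iSup₂ (f := fun (γ : ℂ) (_ : ‖γ‖₊ ≤ r * c) => V γ) _ hle hkey
      · rw [iSup_neg hγ] at hw
        simp only [Submodule.mem_bot] at hw
        rw [hw, lie_zero]
        exact zero_mem _
  -- iterate
  have hpow : ∀ k : ℕ, ∀ c : NNReal, ∀ v ∈ W c,
      ((LieAlgebra.ad ℂ L X) ^ k) v ∈ W (r ^ k * c) := by
    intro k
    induction k with
    | zero => intro c v hv; simpa using hv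
    | succ k ih =>
      intro c v hv
      have h1 : ((LieAlgebra.ad ℂ L X) ^ (k + 1)) v
          = (LieAlgebra.ad ℂ L X) (((LieAlgebra.ad ℂ L X) ^ k) v) := by
        rw [pow_succ']
        rfl
      rw [h1]
      have h2 := hbra X hXG (r ^ k * c) _ (ih c v hv)
      have h3 : r * (r ^ k * c) = r ^ (k + 1) * c := by ring
      rw [← h3]
      simpa [LieAlgebra.ad_apply] using h2
  -- everything is in `W M`
  have htopW : ∀ v : L, v ∈ W M := by
    have : (⊤ : Submodule ℂ L) ≤ W M := by
      rw [← Module.End.iSup_maxGenEigenspace_eq_top S]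
      apply iSup_le
      intro μ
      by_cases hb : V μ = ⊥
      · rw [show S.maxGenEigenspace μ = V μ from rfl, hb]; exact bot_le
      · exact le_iSup₂ (f := fun (γ : ℂ) (_ : ‖γ‖₊ ≤ M) => V γ) μ (hMle μ hb)
    exact fun v => this Submodule.mem_top
  -- choose the nilpotency exponent
  obtain ⟨k, hk⟩ : ∃ k : ℕ, r ^ k * M < ε := by
    obtain ⟨k, hk⟩ := NNReal.exists_pow_lt_of_lt_one
      (show 0 < ε / (M + 1) by positivity) hr1
    refine ⟨k, ?_⟩
    have h1 : r ^ k * M < (ε / (M + 1)) * (M + 1) := by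
      apply lt_of_le_of_lt (b := r ^ k * (M + 1))
      · exact mul_le_mul_right (by simp) _
      · exact mul_lt_mul_of_pos_right hk (by positivity)
    calc r ^ k * M < (ε / (M + 1)) * (M + 1) := h1
      _ = ε := div_mul_cancel₀ _ (by positivity)
  -- `W (r ^ k * M)` is trivial
  have hWbot : W (r ^ k * M) = ⊥ := by
    rw [eq_bot_iff]
    apply iSup₂_le
    intro γ hγ
    by_cases hb : V γ = ⊥
    · exact le_of_eq hb
    · exact absurd ((hεle γ hb).trans hγ) (not_le.mpr hk)
  refine ⟨k, ?_⟩
  ext v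
  simp only [LinearMap.zero_apply]
  have hv := hpow k M v (htopW v)
  rw [hWbot] at hv
  simpa using hv
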